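/- Let α ≥ 0 and 1 < p < ∞. If g ∈ X^p_α then g belongs to the Besov space B_p, that is, ∫_𝔻 |g'(z)|^p (1-|z|²)^{p-2} dA(z) ≤ C ‖g‖_{X^p_α}^p. -/

import Mathlib

open MeasureTheory Metric Complex ENNReal

/-- The open unit disk in `ℂ`. -/
def unitDisk : Set ℂ := Metric.ball (0 : ℂ) 1

/-- Normalized area measure `dA = (1/π) dx dy` on `ℂ`. -/
noncomputable def mA : Measure ℂ := (ENNReal.ofReal Real.pi)⁻¹ • volume

/-- The `p`-th power of the `X^p_α` norm:
`‖g‖_{X^p_α}^p = |g(0)|^p + ∫_𝔻 ((1-|w|²)^α ∫_𝔻 |g'(z)|² dA_α(z)/|1-conj(w)z|^{2+2α})^{p/2}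
(1-|w|²)^{p-2} dA(w)`, valued in `[0,∞]`. -/
noncomputable def XnormE (p α : ℝ) (g : ℂ → ℂ) : ℝ≥0∞ :=
  ENNReal.ofReal (‖g 0‖ ^ p) +
    ∫⁻ w in unitDisk,
      (ENNReal.ofReal ((1 - ‖w‖ ^ 2) ^ α) *
        ∫⁻ z in unitDisk,
          ENNReal.ofReal (‖deriv g z‖ ^ 2 * ((α + 1) * (1 - ‖z‖ ^ 2) ^ α) /
            ‖1 - (starRingEnd ℂ) w * z‖ ^ (2 + 2 * α)) ∂mA) ^ (p / 2) *
      ENNReal.ofReal ((1 - ‖w‖ ^ 2) ^ (p - 2)) ∂mA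


section AuxProof
open intervalIntegral Set
open scoped Real


lemma circleMV {f : ℂ → ℂ} {c : ℂ} {r : ℝ} (hr : 0 < r)
    (hc : ContinuousOn f (closedBall c r)) (hd : DifferentiableOn ℂ f (ball c r)) :
    ∫ θ in (0:ℝ)..(2*π), f (circleMap c r θ) = (2*π) * f c := by
  have h := circleIntegral_sub_center_inv_smul_of_differentiable_on_off_countable hr
    Set.countable_empty hc (fun z hz => (hd z hz.1).differentiableAt
      (isOpen_ball.mem_nhds hz.1))
  rw [circleIntegral] at h
  simp only [deriv_circleMap, circleMap_sub_center, smul_eq_mul] at h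
  have hne : ∀ θ : ℝ, circleMap 0 r θ ≠ 0 := fun θ => by
    simp [circleMap, Complex.exp_ne_zero, hr.ne']
  have : ∀ θ : ℝ, circleMap 0 r θ * I * ((circleMap 0 r θ)⁻¹ * f (circleMap c r θ))
      = I * f (circleMap c r θ) := by
    intro θ; field_simp [hne θ]
  simp only [this] at h
  rw [intervalIntegral.integral_const_mul] at h
  have h2 : I * ∫ θ in (0:ℝ)..(2*π), f (circleMap c r θ) = I * ((2*π) * f c) := by
    rw [h]; ring
  exact mul_left_cancel₀ I_ne_zero h2

lemma sqMV {f : ℂ → ℂ} {c : ℂ} {r : ℝ} (hr : 0 < r)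
    (hc : ContinuousOn f (closedBall c r)) (hd : DifferentiableOn ℂ f (ball c r)) :
    2*π*‖f c‖^2 ≤ ∫ θ in (0:ℝ)..(2*π), ‖f (circleMap c r θ)‖^2 := by
  have h := circleMV (f := fun z => f z * f z) hr (hc.mul hc) (hd.mul hd)
  calc 2*π*‖f c‖^2 = ‖∫ θ in (0:ℝ)..(2*π), f (circleMap c r θ) * f (circleMap c r θ)‖ := by
        rw [h]
        simp [norm_mul, Complex.norm_real]
        rw [abs_of_pos Real.pi_pos]; ring
    _ ≤ ∫ θ in (0:ℝ)..(2*π), ‖f (circleMap c r θ) * f (circleMap c r θ)‖ :=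
        intervalIntegral.norm_integral_le_integral_norm Real.two_pi_pos.le
    _ = ∫ θ in (0:ℝ)..(2*π), ‖f (circleMap c r θ)‖^2 := by
        congr 1; funext θ; rw [norm_mul]; ring

lemma areaSubMV {f : ℂ → ℂ} (hm : Measurable f) {c : ℂ} {R : ℝ} (hR : 0 < R)
    (hc : ContinuousOn f (closedBall c R)) (hd : DifferentiableOn ℂ f (ball c R)) :
    π * R^2 * ‖f c‖^2 ≤ ∫ z in ball c R, ‖f z‖^2 := by
  -- the integrand, as a global function
  set F : ℂ → ℝ := (ball c R).indicator (fun z => ‖f z‖^2) with hF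
  have hcont : ContinuousOn (fun z => ‖f z‖^2) (closedBall c R) := (hc.norm).pow 2
  have hint : IntegrableOn (fun z => ‖f z‖^2) (ball c R) volume :=
    (hcont.integrableOn_compact (isCompact_closedBall c R)).mono_set ball_subset_closedBall
  -- a bound for F
  obtain ⟨M, hM⟩ := (isCompact_closedBall c R).exists_bound_of_continuousOn hc
  have hM0 : 0 ≤ M := le_trans (norm_nonneg _) (hM c (mem_closedBall_self hR.le))
  have hFle : ∀ z, F z ≤ M^2 := by
    intro z
    by_cases hz : z ∈ ball c R
    · rw [hF, Set.indicator_of_mem hz]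
      have h' := hM z (ball_subset_closedBall hz)
      nlinarith [norm_nonneg (f z)]
    · rw [hF, Set.indicator_of_notMem hz]; positivity
  have hF0 : ∀ z, 0 ≤ F z := by
    intro z; rw [hF]; apply Set.indicator_nonneg; intro z _; positivity
  have hFmeas : Measurable F := ((hm.norm).pow_const 2).indicator measurableSet_ball
  -- transport to polar coordinates
  have h1 : ∫ z in ball c R, ‖f z‖^2 = ∫ z, F z := (MeasureTheory.integral_indicator measurableSet_ball).symm
  have h2 : ∫ z, F z = ∫ z, F (c + z) := (integral_add_left_eq_self F c).symm
  have h3 : ∫ z, F (c + z) = ∫ p in polarCoord.target, p.1 • F (c + Complex.polarCoord.symm p) :=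
    (Complex.integral_comp_polarCoord_symm (fun z => F (c + z))).symm
  set G : ℝ × ℝ → ℝ := fun p => p.1 * F (circleMap c p.1 p.2) with hG
  have hsymm : ∀ p : ℝ × ℝ, c + Complex.polarCoord.symm p = circleMap c p.1 p.2 := by
    intro p; simp [circleMap, Complex.exp_mul_I]
  have h4 : ∫ p in polarCoord.target, p.1 • F (c + Complex.polarCoord.symm p)
      = ∫ p in polarCoord.target, G p := by
    congr 1; funext p; rw [hsymm p, smul_eq_mul]
  -- restrict to the box S
  set S : Set (ℝ × ℝ) := Ioo 0 R ×ˢ Ioo (-π) π with hS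
  have hGzero : ∀ p : ℝ × ℝ, R ≤ p.1 → G p = 0 := by
    intro p hp
    have : circleMap c p.1 p.2 ∉ ball c R := by
      rw [mem_ball, dist_eq, circleMap_sub_center, norm_circleMap_zero]
      exact not_lt.2 (le_trans hp (le_abs_self _))
    rw [hG]; simp only []
    rw [hF, Set.indicator_of_notMem this, mul_zero]
  have hGind : G = Set.indicator {p : ℝ × ℝ | p.1 < R} G := by
    funext p
    by_cases hp : p.1 < R
    · rw [Set.indicator_of_mem (show p ∈ {q : ℝ × ℝ | q.1 < R} from hp) G]
    · rw [Set.indicator_of_notMem (show p ∉ {q : ℝ × ℝ | q.1 < R} from hp) G,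
        hGzero p (not_lt.1 hp)]
  have hmeasR : MeasurableSet {p : ℝ × ℝ | p.1 < R} :=
    measurableSet_lt measurable_fst measurable_const
  have h5 : ∫ p in polarCoord.target, G p = ∫ p in S, G p := by
    conv_lhs => rw [hGind]
    rw [setIntegral_indicator hmeasR]
    have htgt : polarCoord.target = Set.Ioi (0:ℝ) ×ˢ Set.Ioo (-π) π := rfl
    have hTS : polarCoord.target ∩ {q : ℝ × ℝ | q.1 < R} = S := by
      rw [htgt, hS]
      ext ⟨x, y⟩
      simp only [Set.mem_inter_iff, Set.mem_prod, Set.mem_Ioi, Set.mem_Ioo, Set.mem_setOf_eq]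
      constructor
      · rintro ⟨⟨h1', h2'⟩, h3'⟩; exact ⟨⟨h1', h3'⟩, h2'⟩
      · rintro ⟨⟨h1', h3'⟩, h2'⟩; exact ⟨⟨h1', h2'⟩, h3'⟩
    rw [hTS]
  -- measurability and integrability of G on S
  have hGmeas : Measurable G := by
    apply measurable_fst.mul
    apply hFmeas.comp
    have : Continuous (fun p : ℝ × ℝ => circleMap c p.1 p.2) := by
      simp only [circleMap]; fun_prop
    exact this.measurable
  have hSmeas : MeasurableSet S := measurableSet_Ioo.prod measurableSet_Ioo
  have hSfin : volume S ≠ ⊤ := by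
    rw [hS, Measure.volume_eq_prod, Measure.prod_prod, Real.volume_Ioo, Real.volume_Ioo]
    exact (ENNReal.mul_lt_top ENNReal.ofReal_lt_top ENNReal.ofReal_lt_top).ne
  have hGbd : ∀ᵐ p ∂(volume.restrict S), ‖G p‖ ≤ R * M^2 := by
    refine (ae_restrict_iff' hSmeas).2 (Filter.Eventually.of_forall fun p hp => ?_)
    have hp1 : 0 < p.1 := by
      rw [hS] at hp; exact hp.1.1
    have hp1R : p.1 ≤ R := by
      rw [hS] at hp; exact hp.1.2.le
    have : ‖G p‖ = p.1 * F (circleMap c p.1 p.2) := by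
      rw [hG]; simp only []
      exact abs_of_nonneg (mul_nonneg hp1.le (hF0 _))
    rw [this]
    exact mul_le_mul hp1R (hFle _) (hF0 _) hR.le
  have hGint : IntegrableOn G S volume :=
    Measure.integrableOn_of_bounded hSfin hGmeas.aestronglyMeasurable hGbd
  have hGint' : Integrable G ((volume.restrict (Ioo (0:ℝ) R)).prod
      (volume.restrict (Ioo (-π) π))) := by
    rw [Measure.prod_restrict, ← Measure.volume_eq_prod]
    rw [hS] at hGint; exact hGint
  -- Fubini
  have h6 : ∫ p in S, G p = ∫ x in Ioo (0:ℝ) R, ∫ y in Ioo (-π) π, G (x, y) := by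
    rw [hS, Measure.volume_eq_prod, ← Measure.prod_restrict]
    exact MeasureTheory.integral_prod _ hGint'
  -- inner estimate
  have hinner : ∀ x ∈ Ioo (0:ℝ) R, 2*π*‖f c‖^2 * x ≤ ∫ y in Ioo (-π) π, G (x, y) := by
    intro x hx
    have hx0 : (0:ℝ) < x := hx.1
    have hxR : x < R := hx.2
    have hFeq : ∀ y : ℝ, G (x, y) = x * ‖f (circleMap c x y)‖^2 := by
      intro y
      have hmem : circleMap c x y ∈ ball c R := by
        rw [mem_ball, dist_eq, circleMap_sub_center, norm_circleMap_zero, abs_of_pos hx0]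
        exact hxR
      rw [hG]; simp only []
      rw [hF, Set.indicator_of_mem hmem]
    calc 2*π*‖f c‖^2 * x = x * (2*π*‖f c‖^2) := by ring
      _ ≤ x * ∫ θ in (0:ℝ)..(2*π), ‖f (circleMap c x θ)‖^2 := by
          apply mul_le_mul_of_nonneg_left _ hx0.le
          exact sqMV hx0 (hc.mono (closedBall_subset_closedBall hxR.le))
            (hd.mono (ball_subset_ball hxR.le))
      _ = ∫ y in Ioo (-π) π, G (x, y) := by
          simp only [hFeq]
          rw [MeasureTheory.integral_const_mul]
          congr 1
          have per : Function.Periodic (fun y : ℝ => ‖f (circleMap c x y)‖^2) (2*π) := by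
            intro y
            simp only []
            rw [periodic_circleMap c x y]
          have heq := per.intervalIntegral_add_eq 0 (-π)
          rw [zero_add] at heq
          have hpi : (-π) + 2*π = π := by ring
          rw [heq, hpi, intervalIntegral.integral_of_le (by linarith [Real.pi_pos] : -π ≤ π),
            MeasureTheory.integral_Ioc_eq_integral_Ioo]
  -- outer estimate
  have hint1 : IntegrableOn (fun x : ℝ => 2*π*‖f c‖^2 * x) (Ioo (0:ℝ) R) volume := by
    apply (Continuous.integrableOn_Icc (by fun_prop) (a := 0) (b := R)).mono_set Ioo_subset_Icc_self
  have hint2 : IntegrableOn (fun x : ℝ => ∫ y in Ioo (-π) π, G (x, y)) (Ioo (0:ℝ) R) volume :=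
    hGint'.integral_prod_left
  have houter := setIntegral_mono_on hint1 hint2 measurableSet_Ioo hinner
  have hval : ∫ x in Ioo (0:ℝ) R, 2*π*‖f c‖^2 * x = π * R^2 * ‖f c‖^2 := by
    rw [MeasureTheory.integral_const_mul]
    have : ∫ x in Ioo (0:ℝ) R, x = R^2/2 := by
      rw [← MeasureTheory.integral_Ioc_eq_integral_Ioo,
        ← intervalIntegral.integral_of_le hR.le, integral_id]
      ring
    rw [this]; ring
  rw [h1, h2, h3, h4, h5, h6]
  rw [hval] at houter
  exact houter

lemma areaSubMV' {f : ℂ → ℂ} (hm : Measurable f) {c : ℂ} {R : ℝ} (hR : 0 < R)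
    (hc : ContinuousOn f (closedBall c R)) (hd : DifferentiableOn ℂ f (ball c R)) :
    ENNReal.ofReal (π * R^2 * ‖f c‖^2) ≤ ∫⁻ z in ball c R, ENNReal.ofReal (‖f z‖^2) := by
  have hint : IntegrableOn (fun z => ‖f z‖^2) (ball c R) volume :=
    (((hc.norm).pow 2).integrableOn_compact (isCompact_closedBall c R)).mono_set
      ball_subset_closedBall
  calc ENNReal.ofReal (π * R^2 * ‖f c‖^2)
      ≤ ENNReal.ofReal (∫ z in ball c R, ‖f z‖^2) :=
        ENNReal.ofReal_le_ofReal (areaSubMV hm hR hc hd)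
    _ = ∫⁻ z in ball c R, ENNReal.ofReal (‖f z‖^2) :=
        MeasureTheory.ofReal_integral_eq_lintegral_ofReal hint
          (Filter.Eventually.of_forall fun z => by positivity)

set_option maxHeartbeats 1000000 in
lemma coreEst (α : ℝ) (hα : 0 ≤ α) (g : ℂ → ℂ) (hg : DifferentiableOn ℂ g unitDisk)
    (w : ℂ) (hw : w ∈ unitDisk) :
    ENNReal.ofReal (‖deriv g w‖^2) ≤
      ENNReal.ofReal (16 * (4:ℝ)^α * (3/2:ℝ)^(2+2*α)) *
      (ENNReal.ofReal ((1 - ‖w‖ ^ 2) ^ α) *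
        ∫⁻ z in unitDisk,
          ENNReal.ofReal (‖deriv g z‖ ^ 2 * ((α + 1) * (1 - ‖z‖ ^ 2) ^ α) /
            ‖1 - (starRingEnd ℂ) w * z‖ ^ (2 + 2 * α)) ∂mA) := by
  set f : ℂ → ℂ := deriv g with hfdef
  set t : ℝ := ‖w‖ with htdef
  have ht : t < 1 := by simpa [unitDisk, mem_ball, dist_zero_right] using hw
  have ht0 : 0 ≤ t := norm_nonneg w
  set u : ℝ := 1 - ‖w‖ ^ 2 with hudef
  have hu : 0 < u := by rw [hudef, ← htdef]; nlinarith
  set R : ℝ := (1 - t)/2 with hRdef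
  have hR : 0 < R := by rw [hRdef]; linarith
  have hRu : u/4 ≤ R := by rw [hRdef, hudef, ← htdef]; nlinarith
  have hRu2 : R ≤ u/2 := by rw [hRdef, hudef, ← htdef]; nlinarith
  -- inclusions
  have hcball : closedBall w R ⊆ unitDisk := by
    intro z hz
    rw [mem_closedBall, dist_eq_norm] at hz
    have : ‖z‖ ≤ t + R := by
      calc ‖z‖ = ‖w + (z - w)‖ := by ring_nf
        _ ≤ ‖w‖ + ‖z - w‖ := norm_add_le _ _
        _ ≤ t + R := by rw [← htdef]; linarith
    rw [unitDisk, mem_ball, dist_zero_right]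
    rw [hRdef] at this; linarith
  have hball : ball w R ⊆ unitDisk := ball_subset_closedBall.trans hcball
  -- analyticity of f = deriv g
  have hopen : IsOpen unitDisk := isOpen_ball
  have hA : AnalyticOnNhd ℂ (deriv g) unitDisk := (hg.analyticOnNhd hopen).deriv
  have hcont : ContinuousOn f (closedBall w R) := (hA.continuousOn).mono hcball
  have hdiff : DifferentiableOn ℂ f (ball w R) := (hA.differentiableOn).mono hball
  have hmeas : Measurable f := measurable_deriv g
  -- constants
  set c1 : ℝ := (u/4)^α / ((3/2*u)^(2+2*α)) with hc1def
  have h32u : (0:ℝ) < (3/2*u)^(2+2*α) := Real.rpow_pos_of_pos (by linarith) _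
  have hc1pos : 0 < c1 := by
    rw [hc1def]
    exact div_pos (Real.rpow_pos_of_pos (by linarith) _) h32u
  -- pointwise estimate on the ball
  have hpt : ∀ z ∈ ball w R, c1 * ‖f z‖^2 ≤
      ‖f z‖ ^ 2 * ((α + 1) * (1 - ‖z‖ ^ 2) ^ α) / ‖1 - (starRingEnd ℂ) w * z‖ ^ (2 + 2 * α) := by
    intro z hz
    rw [mem_ball, dist_eq_norm] at hz
    have hz2 : ‖z‖ ≤ t + R := by
      calc ‖z‖ = ‖w + (z - w)‖ := by ring_nf
        _ ≤ ‖w‖ + ‖z - w‖ := norm_add_le _ _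
        _ ≤ t + R := by rw [← htdef]; linarith
    have hz1 : ‖z‖ < 1 := by rw [hRdef] at hz2; linarith
    have h1z : R ≤ 1 - ‖z‖ ^ 2 := by
      have h' : ‖z‖ ≤ (1+t)/2 := by rw [hRdef] at hz2; linarith
      nlinarith [norm_nonneg z]
    have hNlow : (u/4)^α ≤ (α + 1) * (1 - ‖z‖ ^ 2) ^ α := by
      have h1 : (u/4)^α ≤ (1 - ‖z‖ ^ 2) ^ α :=
        Real.rpow_le_rpow (by positivity) (le_trans hRu h1z) hα
      have h2 : (1 - ‖z‖ ^ 2) ^ α ≤ (α + 1) * (1 - ‖z‖ ^ 2) ^ α := by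
        nlinarith [Real.rpow_nonneg (show (0:ℝ) ≤ 1 - ‖z‖^2 by nlinarith [norm_nonneg z]) α]
      linarith
    have hD : ‖1 - (starRingEnd ℂ) w * z‖ ≤ 3/2 * u := by
      have heq : 1 - (starRingEnd ℂ) w * z
          = (1 - (starRingEnd ℂ) w * w) + (starRingEnd ℂ) w * (w - z) := by ring
      have h1 : ‖(1 : ℂ) - (starRingEnd ℂ) w * w‖ = u := by
        have hcw : (starRingEnd ℂ) w * w = ((‖w‖^2 : ℝ) : ℂ) := by
          rw [mul_comm, Complex.mul_conj]
          norm_cast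
          rw [Complex.normSq_eq_norm_sq]
        rw [hcw, hudef]
        rw [← Complex.ofReal_one, ← Complex.ofReal_sub, Complex.norm_real]
        exact Real.norm_of_nonneg (by nlinarith)
      have h2 : ‖(starRingEnd ℂ) w * (w - z)‖ ≤ R := by
        rw [norm_mul, RCLike.norm_conj]
        calc ‖w‖ * ‖w - z‖ ≤ 1 * R := by
              apply mul_le_mul ht.le _ (norm_nonneg _) zero_le_one
              rw [← norm_neg]; simpa [neg_sub] using hz.le
          _ = R := one_mul R
      calc ‖1 - (starRingEnd ℂ) w * z‖ ≤ ‖(1 : ℂ) - (starRingEnd ℂ) w * w‖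
            + ‖(starRingEnd ℂ) w * (w - z)‖ := by rw [heq]; exact norm_add_le _ _
        _ ≤ u + R := by rw [h1]; linarith
        _ ≤ 3/2 * u := by linarith
    have hDpos : 0 < ‖1 - (starRingEnd ℂ) w * z‖ := by
      rw [norm_pos_iff]
      intro hcon
      have h2 : ‖(starRingEnd ℂ) w * z‖ < 1 := by
        rw [norm_mul, RCLike.norm_conj]
        calc ‖w‖ * ‖z‖ ≤ 1 * ‖z‖ := by
              apply mul_le_mul_of_nonneg_right ht.le (norm_nonneg _)
          _ = ‖z‖ := one_mul _
          _ < 1 := hz1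
      rw [sub_eq_zero] at hcon
      rw [← hcon] at h2
      simp at h2
    have hDrpos : 0 < ‖1 - (starRingEnd ℂ) w * z‖ ^ (2 + 2 * α) :=
      Real.rpow_pos_of_pos hDpos _
    have hDpow : ‖1 - (starRingEnd ℂ) w * z‖ ^ (2 + 2 * α) ≤ (3/2*u)^(2+2*α) :=
      Real.rpow_le_rpow (norm_nonneg _) hD (by linarith)
    have hdiv : (u/4)^α / ((3/2*u)^(2+2*α)) ≤
        ((α + 1) * (1 - ‖z‖ ^ 2) ^ α) / ‖1 - (starRingEnd ℂ) w * z‖ ^ (2 + 2 * α) :=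
      div_le_div₀ (by nlinarith [Real.rpow_nonneg (show (0:ℝ) ≤ u/4 by positivity) α]) hNlow
        hDrpos hDpow
    calc c1 * ‖f z‖^2 = ‖f z‖^2 * ((u/4)^α / ((3/2*u)^(2+2*α))) := by rw [hc1def]; ring
      _ ≤ ‖f z‖^2 * (((α + 1) * (1 - ‖z‖ ^ 2) ^ α) /
          ‖1 - (starRingEnd ℂ) w * z‖ ^ (2 + 2 * α)) :=
        mul_le_mul_of_nonneg_left hdiv (by positivity)
      _ = ‖f z‖ ^ 2 * ((α + 1) * (1 - ‖z‖ ^ 2) ^ α) /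
          ‖1 - (starRingEnd ℂ) w * z‖ ^ (2 + 2 * α) := by ring
  -- the big integral
  set J := ∫⁻ z in unitDisk,
      ENNReal.ofReal (‖f z‖ ^ 2 * ((α + 1) * (1 - ‖z‖ ^ 2) ^ α) /
        ‖1 - (starRingEnd ℂ) w * z‖ ^ (2 + 2 * α)) ∂mA with hJ
  have step1 : (∫⁻ z in ball w R,
      ENNReal.ofReal (‖f z‖ ^ 2 * ((α + 1) * (1 - ‖z‖ ^ 2) ^ α) /
        ‖1 - (starRingEnd ℂ) w * z‖ ^ (2 + 2 * α)) ∂mA) ≤ J := by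
    rw [hJ]
    exact lintegral_mono' (Measure.restrict_mono hball le_rfl) le_rfl
  have step2 : ENNReal.ofReal c1 * ∫⁻ z in ball w R, ENNReal.ofReal (‖f z‖^2) ∂mA
      ≤ ∫⁻ z in ball w R,
        ENNReal.ofReal (‖f z‖ ^ 2 * ((α + 1) * (1 - ‖z‖ ^ 2) ^ α) /
          ‖1 - (starRingEnd ℂ) w * z‖ ^ (2 + 2 * α)) ∂mA := by
    rw [← lintegral_const_mul' _ _ ENNReal.ofReal_ne_top]
    refine setLIntegral_mono' measurableSet_ball fun z hz => ?_
    rw [← ENNReal.ofReal_mul hc1pos.le]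
    exact ENNReal.ofReal_le_ofReal (hpt z hz)
  have step3 : ENNReal.ofReal (R^2 * ‖f w‖^2)
      ≤ ∫⁻ z in ball w R, ENNReal.ofReal (‖f z‖^2) ∂mA := by
    have harea := areaSubMV' hmeas hR hcont hdiff
    have hpine : (ENNReal.ofReal π) ≠ 0 := (ENNReal.ofReal_pos.2 Real.pi_pos).ne'
    calc ENNReal.ofReal (R^2 * ‖f w‖^2)
        = (ENNReal.ofReal π)⁻¹ * ENNReal.ofReal (π * (R^2 * ‖f w‖^2)) := by
          rw [ENNReal.ofReal_mul Real.pi_pos.le, ← mul_assoc,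
            ENNReal.inv_mul_cancel hpine ENNReal.ofReal_ne_top, one_mul]
      _ ≤ (ENNReal.ofReal π)⁻¹ * ∫⁻ z in ball w R, ENNReal.ofReal (‖f z‖^2) := by
          apply mul_le_mul_right
          have heq : π * (R^2*‖f w‖^2) = π * R^2 * ‖f w‖^2 := by ring
          rw [heq]; exact harea
      _ = ∫⁻ z in ball w R, ENNReal.ofReal (‖f z‖^2) ∂mA := by
          simp only [mA, Measure.restrict_smul, lintegral_smul_measure, smul_eq_mul]
  -- the arithmetic of constants
  set K : ℝ := 16 * (4:ℝ)^α * (3/2:ℝ)^(2+2*α) with hK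
  have h4 : (0:ℝ) < (4:ℝ)^α := Real.rpow_pos_of_pos (by norm_num) α
  have h32 : (0:ℝ) < (3/2:ℝ)^(2+2*α) := Real.rpow_pos_of_pos (by norm_num) _
  have hKpos : 0 < K := by rw [hK]; positivity
  have huα : (0:ℝ) < u^α := Real.rpow_pos_of_pos hu _
  have hKey : ‖f w‖^2 ≤ K * (u^α * (c1 * (R^2 * ‖f w‖^2))) := by
    have hc1' : c1 = u^α / (4^α * ((3/2:ℝ)^(2+2*α) * u^(2+2*α))) := by
      rw [hc1def, Real.div_rpow hu.le (by norm_num : (0:ℝ) ≤ 4),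
        Real.mul_rpow (by norm_num : (0:ℝ) ≤ 3/2) hu.le]
      ring
    have huu : u^α * u^α * u^2 = u^(2+2*α) := by
      rw [← Real.rpow_natCast u 2, ← Real.rpow_add hu, ← Real.rpow_add hu]
      congr 1
      push_cast
      ring
    have hu22 : (0:ℝ) < u^(2+2*α) := Real.rpow_pos_of_pos hu _
    have hone : 1 ≤ K * (u^α * (c1 * (u^2/16))) := by
      have heq : K * (u^α * (c1 * (u^2/16))) = 1 := by
        rw [hc1', hK, ← huu]
        field_simp
      rw [heq]
    have hR2 : u^2/16 ≤ R^2 := by nlinarith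
    have hone' : 1 ≤ K * (u^α * (c1 * R^2)) := by
      refine le_trans hone ?_
      exact mul_le_mul_of_nonneg_left (mul_le_mul_of_nonneg_left
        (mul_le_mul_of_nonneg_left hR2 hc1pos.le) huα.le) hKpos.le
    calc ‖f w‖^2 = 1 * ‖f w‖^2 := (one_mul _).symm
      _ ≤ (K * (u^α * (c1 * R^2))) * ‖f w‖^2 :=
          mul_le_mul_of_nonneg_right hone' (by positivity)
      _ = K * (u^α * (c1 * (R^2 * ‖f w‖^2))) := by ring
  calc ENNReal.ofReal (‖f w‖^2)
      ≤ ENNReal.ofReal (K * (u^α * (c1 * (R^2 * ‖f w‖^2)))) := ENNReal.ofReal_le_ofReal hKey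
    _ = ENNReal.ofReal K * (ENNReal.ofReal (u^α) * (ENNReal.ofReal c1 *
        ENNReal.ofReal (R^2 * ‖f w‖^2))) := by
        rw [ENNReal.ofReal_mul hKpos.le, ENNReal.ofReal_mul huα.le, ENNReal.ofReal_mul hc1pos.le]
    _ ≤ ENNReal.ofReal K * (ENNReal.ofReal (u^α) * (ENNReal.ofReal c1 *
        ∫⁻ z in ball w R, ENNReal.ofReal (‖f z‖^2) ∂mA)) :=
        mul_le_mul_right (mul_le_mul_right (mul_le_mul_right step3 _) _) _
    _ ≤ ENNReal.ofReal K * (ENNReal.ofReal (u^α) * J) :=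
        mul_le_mul_right (mul_le_mul_right (step2.trans step1) _) _


end AuxProof

/-- Let `α ≥ 0`, `1 < p < ∞`. If `g ∈ X^p_α` then `g` belongs to the Besov space `B_p`:
`∫_𝔻 |g'(z)|^p (1-|z|²)^{p-2} dA(z) ≤ C ‖g‖_{X^p_α}^p`. -/
theorem stmt10 (α p : ℝ) (hα : 0 ≤ α) (hp : 1 < p) :
    ∃ C : ℝ≥0∞, C ≠ ⊤ ∧ ∀ g : ℂ → ℂ, DifferentiableOn ℂ g unitDisk →
      (∫⁻ z in unitDisk,
          ENNReal.ofReal (‖deriv g z‖ ^ p * (1 - ‖z‖ ^ 2) ^ (p - 2)) ∂mA) ≤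
        C * XnormE p α g := by
  set K : ℝ := 16 * (4:ℝ)^α * (3/2:ℝ)^(2+2*α) with hK
  have hp2 : (0:ℝ) ≤ p/2 := by linarith
  refine ⟨(ENNReal.ofReal K) ^ (p/2),
    ENNReal.rpow_ne_top_of_nonneg hp2 ENNReal.ofReal_ne_top, fun g hg => ?_⟩
  set C : ENNReal := (ENNReal.ofReal K) ^ (p/2) with hC
  have hpt : ∀ w ∈ unitDisk,
      ENNReal.ofReal (‖deriv g w‖ ^ p * (1 - ‖w‖ ^ 2) ^ (p - 2)) ≤
      C * ((ENNReal.ofReal ((1 - ‖w‖ ^ 2) ^ α) *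
        ∫⁻ z in unitDisk,
          ENNReal.ofReal (‖deriv g z‖ ^ 2 * ((α + 1) * (1 - ‖z‖ ^ 2) ^ α) /
            ‖1 - (starRingEnd ℂ) w * z‖ ^ (2 + 2 * α)) ∂mA) ^ (p / 2) *
        ENNReal.ofReal ((1 - ‖w‖ ^ 2) ^ (p - 2))) := by
    intro w hw
    set Q : ENNReal := ENNReal.ofReal ((1 - ‖w‖ ^ 2) ^ α) *
        ∫⁻ z in unitDisk,
          ENNReal.ofReal (‖deriv g z‖ ^ 2 * ((α + 1) * (1 - ‖z‖ ^ 2) ^ α) /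
            ‖1 - (starRingEnd ℂ) w * z‖ ^ (2 + 2 * α)) ∂mA with hQ
    have hcore : ENNReal.ofReal (‖deriv g w‖^2) ≤ ENNReal.ofReal K * Q :=
      coreEst α hα g hg w hw
    have h1 : ENNReal.ofReal (‖deriv g w‖ ^ p * (1 - ‖w‖ ^ 2) ^ (p - 2)) =
        ENNReal.ofReal (‖deriv g w‖ ^ p) * ENNReal.ofReal ((1 - ‖w‖ ^ 2) ^ (p - 2)) :=
      ENNReal.ofReal_mul (Real.rpow_nonneg (norm_nonneg _) p)
    have h2 : ENNReal.ofReal (‖deriv g w‖ ^ p) =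
        (ENNReal.ofReal (‖deriv g w‖ ^ 2)) ^ (p/2) := by
      have e1 : ‖deriv g w‖ ^ p = (‖deriv g w‖ ^ 2 : ℝ) ^ (p/2) := by
        rw [← Real.rpow_natCast ‖deriv g w‖ 2, ← Real.rpow_mul (norm_nonneg _)]
        norm_num
        congr 1
        ring
      rw [e1, ENNReal.ofReal_rpow_of_nonneg (by positivity) hp2]
    calc ENNReal.ofReal (‖deriv g w‖ ^ p * (1 - ‖w‖ ^ 2) ^ (p - 2))
        = (ENNReal.ofReal (‖deriv g w‖ ^ 2)) ^ (p/2) *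
          ENNReal.ofReal ((1 - ‖w‖ ^ 2) ^ (p - 2)) := by rw [h1, h2]
      _ ≤ (ENNReal.ofReal K * Q) ^ (p/2) *
          ENNReal.ofReal ((1 - ‖w‖ ^ 2) ^ (p - 2)) :=
          mul_le_mul_left (ENNReal.rpow_le_rpow hcore hp2) _
      _ = C * (Q ^ (p/2) * ENNReal.ofReal ((1 - ‖w‖ ^ 2) ^ (p - 2))) := by
          rw [ENNReal.mul_rpow_of_nonneg _ _ hp2, hC, mul_assoc]
  calc (∫⁻ w in unitDisk,
        ENNReal.ofReal (‖deriv g w‖ ^ p * (1 - ‖w‖ ^ 2) ^ (p - 2)) ∂mA)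
      ≤ ∫⁻ w in unitDisk,
        C * ((ENNReal.ofReal ((1 - ‖w‖ ^ 2) ^ α) *
          ∫⁻ z in unitDisk,
            ENNReal.ofReal (‖deriv g z‖ ^ 2 * ((α + 1) * (1 - ‖z‖ ^ 2) ^ α) /
              ‖1 - (starRingEnd ℂ) w * z‖ ^ (2 + 2 * α)) ∂mA) ^ (p / 2) *
          ENNReal.ofReal ((1 - ‖w‖ ^ 2) ^ (p - 2))) ∂mA :=
        setLIntegral_mono' measurableSet_ball hpt
    _ = C * ∫⁻ w in unitDisk,
        ((ENNReal.ofReal ((1 - ‖w‖ ^ 2) ^ α) *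
          ∫⁻ z in unitDisk,
            ENNReal.ofReal (‖deriv g z‖ ^ 2 * ((α + 1) * (1 - ‖z‖ ^ 2) ^ α) /
              ‖1 - (starRingEnd ℂ) w * z‖ ^ (2 + 2 * α)) ∂mA) ^ (p / 2) *
          ENNReal.ofReal ((1 - ‖w‖ ^ 2) ^ (p - 2))) ∂mA :=
        lintegral_const_mul' _ _ (ENNReal.rpow_ne_top_of_nonneg hp2 ENNReal.ofReal_ne_top)
    _ ≤ C * XnormE p α g := by
        apply mul_le_mul_right
        exact le_add_self
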